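/- Let α > 0 and define, for paths x, y : (−∞,0) → ℝ^P, the weighted inner product ⟨x,y⟩_w = ∫_{−∞}^{0} (−t)^{2α−1} x(t)ᵀ y(t) dt and norm ‖x‖_w² = ⟨x,x⟩_w. Let x, y be differentiable paths such that ‖x‖_w, ‖y‖_w, ‖t ↦ −t ẋ(t)‖_w, ‖t ↦ −t ẏ(t)‖_w are all finite and (−t)^{2α} ‖x(t)‖ ‖y(t)‖ → 0 both as t → −∞ and as t → 0⁻ (and likewise for (−t)^{2α}‖x(t)‖²). Then: (1) ⟨x, t ↦ −t ẏ(t)⟩_w = 2α ⟨x, y⟩_w − ⟨t ↦ −t ẋ(t), y⟩_w; (2) ⟨x, t ↦ −t ẋ(t)⟩_w = α ‖x‖_w²; (3) ‖x‖_w ≤ (1/α) ‖t ↦ −t ẋ(t)‖_w. -/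

import Mathlib

open MeasureTheory Filter

noncomputable section

/-- FTC on `(-∞, 0)` with vanishing limits at both ends. -/
lemma ftc_Iio_zero (f f' : ℝ → ℝ)
    (hderiv : ∀ t < (0:ℝ), HasDerivAt f (f' t) t)
    (hint : IntegrableOn f' (Set.Iio 0))
    (hbot : Tendsto f atBot (nhds 0))
    (hzero : Tendsto f (nhdsWithin 0 (Set.Iio 0)) (nhds 0)) :
    ∫ t in Set.Iio (0:ℝ), f' t = 0 := by
  have key : ∀ c < (0:ℝ), ∫ t in Set.Iic c, f' t = f c := by
    intro c hc
    have h := integral_Iic_of_hasDerivAt_of_tendsto'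
      (f := f) (f' := f') (a := c) (m := 0)
      (fun t ht => hderiv t (lt_of_le_of_lt ht hc))
      (hint.mono_set (Set.Iic_subset_Iio.mpr hc)) hbot
    simpa using h
  set u : ℕ → ℝ := fun n => -(1 / (n + 1)) with hu
  have hun : ∀ n : ℕ, u n < 0 := by
    intro n
    have : (0:ℝ) < 1 / (n + 1) := by positivity
    simp only [hu]; linarith
  have hulim : Tendsto u atTop (nhds 0) := by
    have h : Tendsto (fun n : ℕ => 1 / ((n : ℝ) + 1)) atTop (nhds 0) :=
      tendsto_one_div_add_atTop_nhds_zero_nat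
    have := h.neg
    simpa [hu] using this
  have h1 : Tendsto (fun n => ∫ t in Set.Iic (u n), f' t) atTop
      (nhds (∫ t in Set.Iio (0:ℝ), f' t)) := by
    have hmono : Monotone (fun n : ℕ => Set.Iic (u n)) := by
      intro m n hmn
      apply Set.Iic_subset_Iic.mpr
      have hm : (0:ℝ) < (m:ℝ) + 1 := by positivity
      have hc : (m:ℝ) ≤ (n:ℝ) := Nat.cast_le.mpr hmn
      have : (1:ℝ) / (n + 1) ≤ 1 / (m + 1) := by
        apply one_div_le_one_div_of_le hm
        linarith
      simp only [hu]; linarith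
    have hUnion : (⋃ n, Set.Iic (u n)) = Set.Iio (0:ℝ) := by
      ext t
      simp only [Set.mem_iUnion, Set.mem_Iic, Set.mem_Iio]
      constructor
      · rintro ⟨n, hn⟩; exact lt_of_le_of_lt hn (hun n)
      · intro ht
        obtain ⟨n, hn⟩ := exists_nat_one_div_lt (show (0:ℝ) < -t by linarith)
        exact ⟨n, by simp only [hu]; linarith⟩
      
    have h := tendsto_setIntegral_of_monotone (fun n => measurableSet_Iic) hmono
      (by rw [hUnion]; exact hint)
    rwa [hUnion] at h
  have h1' : Tendsto (fun n => f (u n)) atTop (nhds (∫ t in Set.Iio (0:ℝ), f' t)) := by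
    refine h1.congr (fun n => key (u n) (hun n))
  have h2 : Tendsto (fun n => f (u n)) atTop (nhds 0) :=
    hzero.comp (tendsto_nhdsWithin_iff.mpr ⟨hulim, Eventually.of_forall hun⟩)
  exact (tendsto_nhds_unique h1' h2)

section Aux

variable {P : ℕ}

lemma aesm_of_hasDerivAt (f f' : ℝ → EuclideanSpace ℝ (Fin P))
    (hf : ∀ t < (0:ℝ), HasDerivAt f (f' t) t) :
    AEStronglyMeasurable f (volume.restrict (Set.Iio 0)) ∧
      AEStronglyMeasurable f' (volume.restrict (Set.Iio 0)) := by
  constructor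
  · exact ContinuousOn.aestronglyMeasurable
      (fun t ht => (hf t ht).continuousAt.continuousWithinAt) measurableSet_Iio
  · refine (stronglyMeasurable_deriv f).aestronglyMeasurable.congr ?_
    filter_upwards [ae_restrict_mem measurableSet_Iio] with t ht
    exact (hf t ht).deriv

lemma weight_aesm (α : ℝ) : AEStronglyMeasurable (fun t : ℝ => (-t) ^ (2*α - 1))
    (volume.restrict (Set.Iio 0)) := by
  refine ContinuousOn.aestronglyMeasurable (fun t ht => ?_) measurableSet_Iio
  exact ((Real.continuousAt_rpow_const (-t) _
    (Or.inl (ne_of_gt (neg_pos.mpr ht)))).comp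
    continuous_neg.continuousAt).continuousWithinAt

lemma integrable_cross (α : ℝ) (x y' : ℝ → EuclideanSpace ℝ (Fin P))
    (hxm : AEStronglyMeasurable x (volume.restrict (Set.Iio 0)))
    (hy'm : AEStronglyMeasurable y' (volume.restrict (Set.Iio 0)))
    (hxI : IntegrableOn (fun t : ℝ => (-t) ^ (2 * α - 1) * ‖x t‖ ^ 2) (Set.Iio 0))
    (hy'I : IntegrableOn (fun t : ℝ => (-t) ^ (2 * α - 1) * ((-t) * ‖y' t‖) ^ 2) (Set.Iio 0)) :
    IntegrableOn
      (fun t : ℝ => (-t) ^ (2 * α - 1) * ((-t) * (inner ℝ (x t) (y' t) : ℝ))) (Set.Iio 0) := by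
  have hmeas : AEStronglyMeasurable
      (fun t : ℝ => (-t) ^ (2*α-1) * ((-t) * (inner ℝ (x t) (y' t) : ℝ)))
      (volume.restrict (Set.Iio 0)) :=
    (weight_aesm α).mul ((measurable_id.neg.aestronglyMeasurable).mul (hxm.inner hy'm))
  refine Integrable.mono' (((hxI.add hy'I).const_mul (1/2))) hmeas ?_
  filter_upwards [ae_restrict_mem measurableSet_Iio] with t ht
  have ht' : (0:ℝ) < -t := neg_pos.mpr ht
  have hw : 0 ≤ (-t) ^ (2*α-1) := Real.rpow_nonneg ht'.le _
  have hin : |(inner ℝ (x t) (y' t) : ℝ)| ≤ ‖x t‖ * ‖y' t‖ := abs_real_inner_le_norm _ _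
  rw [Real.norm_eq_abs, abs_mul, abs_of_nonneg hw, abs_mul, abs_of_nonneg ht'.le]
  have h1 : (-t) * |(inner ℝ (x t) (y' t) : ℝ)| ≤
      (1/2) * (‖x t‖ ^ 2 + ((-t) * ‖y' t‖) ^ 2) := by
    nlinarith [sq_nonneg (‖x t‖ - (-t) * ‖y' t‖), abs_nonneg (inner ℝ (x t) (y' t) : ℝ),
      norm_nonneg (x t), norm_nonneg (y' t), mul_le_mul_of_nonneg_left hin ht'.le]
  calc (-t) ^ (2*α-1) * ((-t) * |(inner ℝ (x t) (y' t) : ℝ)|)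
      ≤ (-t) ^ (2*α-1) * ((1/2) * (‖x t‖ ^ 2 + ((-t) * ‖y' t‖) ^ 2)) :=
        mul_le_mul_of_nonneg_left h1 hw
    _ = 1/2 * ((-t) ^ (2*α-1) * ‖x t‖ ^ 2 + (-t) ^ (2*α-1) * ((-t) * ‖y' t‖) ^ 2) := by ring

lemma integrable_pair (α : ℝ) (x y : ℝ → EuclideanSpace ℝ (Fin P))
    (hxm : AEStronglyMeasurable x (volume.restrict (Set.Iio 0)))
    (hym : AEStronglyMeasurable y (volume.restrict (Set.Iio 0)))
    (hxI : IntegrableOn (fun t : ℝ => (-t) ^ (2 * α - 1) * ‖x t‖ ^ 2) (Set.Iio 0))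
    (hyI : IntegrableOn (fun t : ℝ => (-t) ^ (2 * α - 1) * ‖y t‖ ^ 2) (Set.Iio 0)) :
    IntegrableOn
      (fun t : ℝ => (-t) ^ (2 * α - 1) * (inner ℝ (x t) (y t) : ℝ)) (Set.Iio 0) := by
  have hmeas : AEStronglyMeasurable
      (fun t : ℝ => (-t) ^ (2*α-1) * (inner ℝ (x t) (y t) : ℝ))
      (volume.restrict (Set.Iio 0)) :=
    (weight_aesm α).mul (hxm.inner hym)
  refine Integrable.mono' (((hxI.add hyI).const_mul (1/2))) hmeas ?_
  filter_upwards [ae_restrict_mem measurableSet_Iio] with t ht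
  have ht' : (0:ℝ) < -t := neg_pos.mpr ht
  have hw : 0 ≤ (-t) ^ (2*α-1) := Real.rpow_nonneg ht'.le _
  have hin : |(inner ℝ (x t) (y t) : ℝ)| ≤ ‖x t‖ * ‖y t‖ := abs_real_inner_le_norm _ _
  rw [Real.norm_eq_abs, abs_mul, abs_of_nonneg hw]
  have h1 : |(inner ℝ (x t) (y t) : ℝ)| ≤ (1/2) * (‖x t‖ ^ 2 + ‖y t‖ ^ 2) := by
    nlinarith [sq_nonneg (‖x t‖ - ‖y t‖)]
  calc (-t) ^ (2*α-1) * |(inner ℝ (x t) (y t) : ℝ)|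
      ≤ (-t) ^ (2*α-1) * ((1/2) * (‖x t‖ ^ 2 + ‖y t‖ ^ 2)) :=
        mul_le_mul_of_nonneg_left h1 hw
    _ = 1/2 * ((-t) ^ (2*α-1) * ‖x t‖ ^ 2 + (-t) ^ (2*α-1) * ‖y t‖ ^ 2) := by ring

/-- The key integration-by-parts identity (part (1)). -/
lemma ibp_identity (α : ℝ) (hα : 0 < α)
    (x y x' y' : ℝ → EuclideanSpace ℝ (Fin P))
    (hx : ∀ t < (0 : ℝ), HasDerivAt x (x' t) t)
    (hy : ∀ t < (0 : ℝ), HasDerivAt y (y' t) t)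
    (hxI : IntegrableOn (fun t : ℝ => (-t) ^ (2 * α - 1) * ‖x t‖ ^ 2) (Set.Iio 0))
    (hyI : IntegrableOn (fun t : ℝ => (-t) ^ (2 * α - 1) * ‖y t‖ ^ 2) (Set.Iio 0))
    (hx'I : IntegrableOn (fun t : ℝ => (-t) ^ (2 * α - 1) * ((-t) * ‖x' t‖) ^ 2) (Set.Iio 0))
    (hy'I : IntegrableOn (fun t : ℝ => (-t) ^ (2 * α - 1) * ((-t) * ‖y' t‖) ^ 2) (Set.Iio 0))
    (hxyBot : Tendsto (fun t : ℝ => (-t) ^ (2 * α) * (‖x t‖ * ‖y t‖)) atBot (nhds 0))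
    (hxyZero : Tendsto (fun t : ℝ => (-t) ^ (2 * α) * (‖x t‖ * ‖y t‖))
      (nhdsWithin 0 (Set.Iio 0)) (nhds 0)) :
    (∫ t in Set.Iio (0 : ℝ), (-t) ^ (2 * α - 1) * ((-t) * (inner ℝ (x t) (y' t) : ℝ))) =
        2 * α * (∫ t in Set.Iio (0 : ℝ), (-t) ^ (2 * α - 1) * (inner ℝ (x t) (y t) : ℝ)) -
          (∫ t in Set.Iio (0 : ℝ), (-t) ^ (2 * α - 1) * ((-t) * (inner ℝ (x' t) (y t) : ℝ))) := by
  obtain ⟨hxm, hx'm⟩ := aesm_of_hasDerivAt x x' hx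
  obtain ⟨hym, hy'm⟩ := aesm_of_hasDerivAt y y' hy
  have int2 : IntegrableOn
      (fun t : ℝ => (-t) ^ (2*α-1) * ((-t) * (inner ℝ (x t) (y' t) : ℝ))) (Set.Iio 0) :=
    integrable_cross α x y' hxm hy'm hxI hy'I
  have int1 : IntegrableOn
      (fun t : ℝ => (-t) ^ (2*α-1) * ((-t) * (inner ℝ (x' t) (y t) : ℝ))) (Set.Iio 0) := by
    have h := integrable_cross α y x' hym hx'm hyI hx'I
    have heq : (fun t : ℝ => (-t) ^ (2*α-1) * ((-t) * (inner ℝ (x' t) (y t) : ℝ))) =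
        fun t : ℝ => (-t) ^ (2*α-1) * ((-t) * (inner ℝ (y t) (x' t) : ℝ)) := by
      funext t; rw [real_inner_comm]
    rw [heq]; exact h
  have intg : IntegrableOn
      (fun t : ℝ => (-t) ^ (2*α-1) * (inner ℝ (x t) (y t) : ℝ)) (Set.Iio 0) :=
    integrable_pair α x y hxm hym hxI hyI
  set F : ℝ → ℝ := fun t => (-t) ^ (2*α) * (inner ℝ (x t) (y t) : ℝ) with hF
  set F' : ℝ → ℝ := fun t =>
    -(2*α) * ((-t) ^ (2*α-1) * (inner ℝ (x t) (y t) : ℝ)) +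
      ((-t) ^ (2*α-1) * ((-t) * (inner ℝ (x t) (y' t) : ℝ)) +
        (-t) ^ (2*α-1) * ((-t) * (inner ℝ (x' t) (y t) : ℝ))) with hF'
  have hderiv : ∀ t < (0:ℝ), HasDerivAt F (F' t) t := by
    intro t ht
    have ht' : (0:ℝ) < -t := neg_pos.mpr ht
    have h1 : HasDerivAt (fun s : ℝ => s ^ (2*α)) (2*α * (-t) ^ (2*α - 1)) (-t) :=
      Real.hasDerivAt_rpow_const (Or.inl (ne_of_gt ht'))
    have h2 : HasDerivAt (fun s : ℝ => -s) (-1 : ℝ) t := (hasDerivAt_id t).neg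
    have hp : HasDerivAt (fun s : ℝ => (-s) ^ (2*α)) ((2*α * (-t) ^ (2*α-1)) * (-1)) t :=
      h1.comp t h2
    have hq : HasDerivAt (fun t => (inner ℝ (x t) (y t) : ℝ))
        ((inner ℝ (x t) (y' t) : ℝ) + (inner ℝ (x' t) (y t) : ℝ)) t :=
      (hx t ht).inner ℝ (hy t ht)
    have hmul := hp.mul hq
    have hrw : (-t) ^ (2*α) = (-t) ^ (2*α-1) * (-t) := by
      rw [← Real.rpow_add_one (ne_of_gt ht') (2*α-1)]
      norm_num
    refine hmul.congr_deriv ?_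
    simp only [hF']
    rw [hrw]; ring
  have hF'int : IntegrableOn F' (Set.Iio 0) := (intg.const_mul _).add (int2.add int1)
  have hbot : Tendsto F atBot (nhds 0) := by
    apply squeeze_zero_norm' _ hxyBot
    filter_upwards [eventually_lt_atBot (0:ℝ)] with t ht
    have ht' : (0:ℝ) < -t := neg_pos.mpr ht
    simp only [hF, Real.norm_eq_abs, abs_mul, abs_of_nonneg (Real.rpow_nonneg ht'.le (2*α))]
    exact mul_le_mul_of_nonneg_left (abs_real_inner_le_norm _ _)
      (Real.rpow_nonneg ht'.le _)
  have hzero : Tendsto F (nhdsWithin 0 (Set.Iio 0)) (nhds 0) := by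
    apply squeeze_zero_norm' _ hxyZero
    filter_upwards [self_mem_nhdsWithin] with t ht
    have ht' : (0:ℝ) < -t := neg_pos.mpr ht
    simp only [hF, Real.norm_eq_abs, abs_mul, abs_of_nonneg (Real.rpow_nonneg ht'.le (2*α))]
    exact mul_le_mul_of_nonneg_left (abs_real_inner_le_norm _ _)
      (Real.rpow_nonneg ht'.le _)
  have h0 : ∫ t in Set.Iio (0:ℝ), F' t = 0 := ftc_Iio_zero F F' hderiv hF'int hbot hzero
  simp only [hF'] at h0
  have e1 : (∫ t in Set.Iio (0:ℝ),
        (-(2*α) * ((-t) ^ (2*α-1) * (inner ℝ (x t) (y t) : ℝ)) +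
          ((-t) ^ (2*α-1) * ((-t) * (inner ℝ (x t) (y' t) : ℝ)) +
            (-t) ^ (2*α-1) * ((-t) * (inner ℝ (x' t) (y t) : ℝ))))) =
      (∫ t in Set.Iio (0:ℝ), -(2*α) * ((-t) ^ (2*α-1) * (inner ℝ (x t) (y t) : ℝ))) +
        ∫ t in Set.Iio (0:ℝ),
          ((-t) ^ (2*α-1) * ((-t) * (inner ℝ (x t) (y' t) : ℝ)) +
            (-t) ^ (2*α-1) * ((-t) * (inner ℝ (x' t) (y t) : ℝ))) :=
    integral_add (intg.const_mul _) (int2.add int1)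
  have e2 : (∫ t in Set.Iio (0:ℝ),
        ((-t) ^ (2*α-1) * ((-t) * (inner ℝ (x t) (y' t) : ℝ)) +
          (-t) ^ (2*α-1) * ((-t) * (inner ℝ (x' t) (y t) : ℝ)))) =
      (∫ t in Set.Iio (0:ℝ), (-t) ^ (2*α-1) * ((-t) * (inner ℝ (x t) (y' t) : ℝ))) +
        ∫ t in Set.Iio (0:ℝ), (-t) ^ (2*α-1) * ((-t) * (inner ℝ (x' t) (y t) : ℝ)) :=
    integral_add int2 int1
  have e3 : (∫ t in Set.Iio (0:ℝ), -(2*α) * ((-t) ^ (2*α-1) * (inner ℝ (x t) (y t) : ℝ))) =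
      -(2*α) * ∫ t in Set.Iio (0:ℝ), (-t) ^ (2*α-1) * (inner ℝ (x t) (y t) : ℝ) :=
    integral_const_mul _ _
  linarith

end Aux

/-- **Properties of the polynomially weighted inner product `⟨x,y⟩_w` on `(-∞,0)`.**
For differentiable paths `x, y : (-∞,0) → ℝ^P` with finite weighted norms
(`‖x‖_w, ‖y‖_w, ‖-tẋ‖_w, ‖-tẏ‖_w < ∞`) and vanishing weighted products at `-∞` and
`0⁻`: (1) `⟨x, -tẏ⟩_w = 2α ⟨x, y⟩_w - ⟨-tẋ, y⟩_w`;  (2) `⟨x, -tẋ⟩_w = α ‖x‖_w²`;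
(3) `‖x‖_w ≤ (1/α) ‖-tẋ‖_w`. -/
theorem weighted_norm_identities_polynomial
    (P : ℕ) (α : ℝ) (hα : 0 < α)
    (x y x' y' : ℝ → EuclideanSpace ℝ (Fin P))
    (hx : ∀ t < (0 : ℝ), HasDerivAt x (x' t) t)
    (hy : ∀ t < (0 : ℝ), HasDerivAt y (y' t) t)
    (hxI : IntegrableOn (fun t : ℝ => (-t) ^ (2 * α - 1) * ‖x t‖ ^ 2) (Set.Iio 0))
    (hyI : IntegrableOn (fun t : ℝ => (-t) ^ (2 * α - 1) * ‖y t‖ ^ 2) (Set.Iio 0))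
    (hx'I : IntegrableOn (fun t : ℝ => (-t) ^ (2 * α - 1) * ((-t) * ‖x' t‖) ^ 2) (Set.Iio 0))
    (hy'I : IntegrableOn (fun t : ℝ => (-t) ^ (2 * α - 1) * ((-t) * ‖y' t‖) ^ 2) (Set.Iio 0))
    (hxyBot : Tendsto (fun t : ℝ => (-t) ^ (2 * α) * (‖x t‖ * ‖y t‖)) atBot (nhds 0))
    (hxyZero : Tendsto (fun t : ℝ => (-t) ^ (2 * α) * (‖x t‖ * ‖y t‖))
      (nhdsWithin 0 (Set.Iio 0)) (nhds 0))
    (hxxBot : Tendsto (fun t : ℝ => (-t) ^ (2 * α) * ‖x t‖ ^ 2) atBot (nhds 0))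
    (hxxZero : Tendsto (fun t : ℝ => (-t) ^ (2 * α) * ‖x t‖ ^ 2)
      (nhdsWithin 0 (Set.Iio 0)) (nhds 0)) :
    (∫ t in Set.Iio (0 : ℝ), (-t) ^ (2 * α - 1) * ((-t) * (inner ℝ (x t) (y' t) : ℝ))) =
        2 * α * (∫ t in Set.Iio (0 : ℝ), (-t) ^ (2 * α - 1) * (inner ℝ (x t) (y t) : ℝ)) -
          (∫ t in Set.Iio (0 : ℝ), (-t) ^ (2 * α - 1) * ((-t) * (inner ℝ (x' t) (y t) : ℝ))) ∧
    (∫ t in Set.Iio (0 : ℝ), (-t) ^ (2 * α - 1) * ((-t) * (inner ℝ (x t) (x' t) : ℝ))) =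
        α * (∫ t in Set.Iio (0 : ℝ), (-t) ^ (2 * α - 1) * ‖x t‖ ^ 2) ∧
    Real.sqrt (∫ t in Set.Iio (0 : ℝ), (-t) ^ (2 * α - 1) * ‖x t‖ ^ 2) ≤
        (1 / α) * Real.sqrt
          (∫ t in Set.Iio (0 : ℝ), (-t) ^ (2 * α - 1) * ((-t) * ‖x' t‖) ^ 2) := by
  have hsq : (fun t : ℝ => (-t) ^ (2 * α) * (‖x t‖ * ‖x t‖)) =
      fun t : ℝ => (-t) ^ (2 * α) * ‖x t‖ ^ 2 := by
    funext t; ring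
  -- Part (2) via the identity applied to (x, x)
  have part2 : (∫ t in Set.Iio (0 : ℝ), (-t) ^ (2 * α - 1) * ((-t) * (inner ℝ (x t) (x' t) : ℝ))) =
      α * (∫ t in Set.Iio (0 : ℝ), (-t) ^ (2 * α - 1) * ‖x t‖ ^ 2) := by
    have h := ibp_identity α hα x x x' x' hx hx hxI hxI hx'I hx'I
      (by rw [hsq]; exact hxxBot) (by rw [hsq]; exact hxxZero)
    have hcomm : (∫ t in Set.Iio (0 : ℝ), (-t) ^ (2 * α - 1) * ((-t) * (inner ℝ (x' t) (x t) : ℝ))) =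
        ∫ t in Set.Iio (0 : ℝ), (-t) ^ (2 * α - 1) * ((-t) * (inner ℝ (x t) (x' t) : ℝ)) := by
      congr 1; funext t; rw [real_inner_comm]
    have hnorm : (∫ t in Set.Iio (0 : ℝ), (-t) ^ (2 * α - 1) * (inner ℝ (x t) (x t) : ℝ)) =
        ∫ t in Set.Iio (0 : ℝ), (-t) ^ (2 * α - 1) * ‖x t‖ ^ 2 := by
      congr 1; funext t; rw [real_inner_self_eq_norm_sq]
    rw [hcomm, hnorm] at h
    linarith
  refine ⟨ibp_identity α hα x y x' y' hx hy hxI hyI hx'I hy'I hxyBot hxyZero, part2, ?_⟩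
  -- Part (3)
  obtain ⟨hxm, hx'm⟩ := aesm_of_hasDerivAt x x' hx
  set A := ∫ t in Set.Iio (0 : ℝ), (-t) ^ (2 * α - 1) * ‖x t‖ ^ 2 with hA
  set B := ∫ t in Set.Iio (0 : ℝ), (-t) ^ (2 * α - 1) * ((-t) * ‖x' t‖) ^ 2 with hB
  have hA0 : 0 ≤ A := by
    apply setIntegral_nonneg measurableSet_Iio
    intro t ht
    have ht' : (0:ℝ) < -t := neg_pos.mpr ht
    positivity
  have hB0 : 0 ≤ B := by
    apply setIntegral_nonneg measurableSet_Iio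
    intro t ht
    have ht' : (0:ℝ) < -t := neg_pos.mpr ht
    positivity
  -- α * A ≤ (1/2) * (α * A + (1/α) * B)
  have hcross : IntegrableOn
      (fun t : ℝ => (-t) ^ (2*α-1) * ((-t) * (inner ℝ (x t) (x' t) : ℝ))) (Set.Iio 0) :=
    integrable_cross α x x' hxm hx'm hxI hx'I
  have hbound : (∫ t in Set.Iio (0 : ℝ), (-t) ^ (2 * α - 1) * ((-t) * (inner ℝ (x t) (x' t) : ℝ)))
      ≤ ∫ t in Set.Iio (0 : ℝ),
          (1/2) * (α * ((-t) ^ (2*α-1) * ‖x t‖ ^ 2) +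
            (1/α) * ((-t) ^ (2*α-1) * ((-t) * ‖x' t‖) ^ 2)) := by
    apply setIntegral_mono_on hcross
      (((hxI.const_mul α).add (hx'I.const_mul (1/α))).const_mul (1/2))
      measurableSet_Iio
    intro t ht
    have ht' : (0:ℝ) < -t := neg_pos.mpr ht
    have hw : 0 ≤ (-t) ^ (2*α-1) := Real.rpow_nonneg ht'.le _
    have hin : (inner ℝ (x t) (x' t) : ℝ) ≤ ‖x t‖ * ‖x' t‖ := real_inner_le_norm _ _
    have h1 : (-t) * (inner ℝ (x t) (x' t) : ℝ) ≤
        (1/2) * (α * ‖x t‖ ^ 2 + (1/α) * ((-t) * ‖x' t‖) ^ 2) := by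
      have h2 : (-t) * (inner ℝ (x t) (x' t) : ℝ) ≤ ‖x t‖ * ((-t) * ‖x' t‖) := by
        nlinarith [mul_le_mul_of_nonneg_left hin ht'.le]
      have h4 : 2 * α * ((-t) * (inner ℝ (x t) (x' t) : ℝ)) ≤
          α ^ 2 * ‖x t‖ ^ 2 + ((-t) * ‖x' t‖) ^ 2 := by
        nlinarith [sq_nonneg (α * ‖x t‖ - (-t) * ‖x' t‖), hα, h2]
      have h5 : 2 * α * ((-t) * (inner ℝ (x t) (x' t) : ℝ)) ≤
          2 * α * ((1/2) * (α * ‖x t‖ ^ 2 + (1/α) * ((-t) * ‖x' t‖) ^ 2)) := by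
        calc 2 * α * ((-t) * (inner ℝ (x t) (x' t) : ℝ))
            ≤ α ^ 2 * ‖x t‖ ^ 2 + ((-t) * ‖x' t‖) ^ 2 := h4
          _ = 2 * α * ((1/2) * (α * ‖x t‖ ^ 2 + (1/α) * ((-t) * ‖x' t‖) ^ 2)) := by
              field_simp
      exact le_of_mul_le_mul_left h5 (by linarith)
    calc (-t) ^ (2*α-1) * ((-t) * (inner ℝ (x t) (x' t) : ℝ))
        ≤ (-t) ^ (2*α-1) * ((1/2) * (α * ‖x t‖ ^ 2 + (1/α) * ((-t) * ‖x' t‖) ^ 2)) :=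
          mul_le_mul_of_nonneg_left h1 hw
      _ = (1/2) * (α * ((-t) ^ (2*α-1) * ‖x t‖ ^ 2) +
            (1/α) * ((-t) ^ (2*α-1) * ((-t) * ‖x' t‖) ^ 2)) := by ring
  have hrhs : (∫ t in Set.Iio (0 : ℝ),
      (1/2) * (α * ((-t) ^ (2*α-1) * ‖x t‖ ^ 2) +
        (1/α) * ((-t) ^ (2*α-1) * ((-t) * ‖x' t‖) ^ 2))) =
      (1/2) * (α * A + (1/α) * B) := by
    rw [integral_const_mul, integral_add (hxI.const_mul α) (hx'I.const_mul (1/α)),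
      integral_const_mul, integral_const_mul]
  rw [part2, hrhs] at hbound
  -- deduce α^2 * A ≤ B
  have hkey : α^2 * A ≤ B := by
    have h6 : α * A ≤ (1/α) * B := by linarith
    have h7 := mul_le_mul_of_nonneg_left h6 hα.le
    have h8 : α * ((1/α) * B) = B := by field_simp
    nlinarith [h7, h8]
  have hsqrt : α * Real.sqrt A ≤ Real.sqrt B := by
    rw [show α * Real.sqrt A = Real.sqrt (α^2 * A) by
      rw [Real.sqrt_mul (by positivity), Real.sqrt_sq hα.le]]
    exact Real.sqrt_le_sqrt hkey
  calc Real.sqrt A = (1/α) * (α * Real.sqrt A) := by field_simp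
    _ ≤ (1/α) * Real.sqrt B := by
        apply mul_le_mul_of_nonneg_left hsqrt (by positivity)
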